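/- Let (X,d) be a T₂ (Hausdorff) quasi-metric space. If (x_n) and (y_n) are sequences in X such that (x_n) has no cluster point in (X,d) and 0 < d(x_n,y_n) < 1/n for all n, then there exist two disjoint closed subsets C and D of (X,d), each containing infinitely many terms of (x_n) and (y_n) respectively, with d(C,D)=0. -/
import Mathlib


open Filter Topology Set

structure IsQuasiMetric {X : Type*} (d : X → X → ℝ) : Prop where
  nonneg : ∀ x y, 0 ≤ d x y
  refl : ∀ x, d x x = 0
  eq_of_both_zero : ∀ x y, d x y = 0 → d y x = 0 → x = y
  triangle : ∀ x y z, d x y ≤ d x z + d z y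

/-- The forward topology generated by forward balls `B⁺(x,ε) = {y | d x y < ε}`. -/
def forwardTopology {X : Type*} (d : X → X → ℝ) : TopologicalSpace X :=
  TopologicalSpace.generateFrom {S | ∃ x : X, ∃ ε : ℝ, 0 < ε ∧ S = {y | d x y < ε}}

/-- `s` forward converges to `x`: `d x (s n) → 0`. -/
def ForwardConv {X : Type*} (d : X → X → ℝ) (s : ℕ → X) (x : X) : Prop :=
  ∀ ε > (0:ℝ), ∃ N : ℕ, ∀ n ≥ N, d x (s n) < ε

/-- `s` backward converges to `x`: `d (s n) x → 0`. -/
def BackwardConv {X : Type*} (d : X → X → ℝ) (s : ℕ → X) (x : X) : Prop :=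
  ∀ ε > (0:ℝ), ∃ N : ℕ, ∀ n ≥ N, d (s n) x < ε

/-- `x` is a cluster point of `s`: some subsequence forward converges to `x`. -/
def IsClusterPointOf {X : Type*} (d : X → X → ℝ) (s : ℕ → X) (x : X) : Prop :=
  ∃ φ : ℕ → ℕ, StrictMono φ ∧ ForwardConv d (s ∘ φ) x

def LeftKCauchy {X : Type*} (d : X → X → ℝ) (s : ℕ → X) : Prop :=
  ∀ ε > (0:ℝ), ∃ n₀ : ℕ, ∀ k n : ℕ, n₀ ≤ k → k ≤ n → d (s k) (s n) < ε

/-- `s` is forward parallel to `t`. -/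
def ForwardParallel {X : Type*} (d : X → X → ℝ) (s t : ℕ → X) : Prop :=
  ∀ ε > (0:ℝ), ∃ N : ℕ, ∀ n ≥ N, d (s n) (t n) < ε

/-- Forward continuity for real-valued functions (ε-δ form). -/
def ForwardContinuous {X : Type*} (d : X → X → ℝ) (f : X → ℝ) : Prop :=
  ∀ x₀ : X, ∀ ε > (0:ℝ), ∃ δ > (0:ℝ), ∀ y, d x₀ y < δ → |f x₀ - f y| < ε

/-- Uniform continuity for real-valued functions. -/
def UniformlyCont {X : Type*} (d : X → X → ℝ) (f : X → ℝ) : Prop :=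
  ∀ ε > (0:ℝ), ∃ δ > (0:ℝ), ∀ x y, d x y < δ → |f x - f y| < ε

/-- `(X,d)` is a UC quasi-metric space. -/
def IsUC {X : Type*} (d : X → X → ℝ) : Prop :=
  ∀ f : X → ℝ, ForwardContinuous d f → UniformlyCont d f

/-- Distance between two sets: `inf {d a b | a ∈ A, b ∈ B}`. -/
noncomputable def setDist {X : Type*} (d : X → X → ℝ) (A B : Set X) : ℝ :=
  sInf {r : ℝ | ∃ a ∈ A, ∃ b ∈ B, d a b = r}

section helpers
variable {X : Type*} {d : X → X → ℝ}

lemma fwd_ball_open (hd : IsQuasiMetric d) (x : X) {ε : ℝ} (hε : 0 < ε) :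
    @IsOpen X (forwardTopology d) {y | d x y < ε} :=
  TopologicalSpace.GenerateOpen.basic _ ⟨x, ε, hε, rfl⟩

lemma fwd_ball_basis (hd : IsQuasiMetric d) {U : Set X}
    (hU : @IsOpen X (forwardTopology d) U) :
    ∀ p ∈ U, ∃ ε > (0:ℝ), {z | d p z < ε} ⊆ U := by
  induction hU with
  | basic S hS =>
    obtain ⟨c, δ, hδ, rfl⟩ := hS
    intro p hp
    refine ⟨δ - d c p, by simpa using hp, fun z hz => ?_⟩
    have := hd.triangle c z p
    simp only [Set.mem_setOf_eq] at *
    linarith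
  | univ => exact fun p _ => ⟨1, one_pos, fun z _ => trivial⟩
  | inter S T hS hT ihS ihT =>
    intro p hp
    obtain ⟨ε₁, hε₁, h₁⟩ := ihS p hp.1
    obtain ⟨ε₂, hε₂, h₂⟩ := ihT p hp.2
    refine ⟨min ε₁ ε₂, lt_min hε₁ hε₂, fun z hz => ?_⟩
    simp only [Set.mem_setOf_eq] at hz
    exact ⟨h₁ (lt_of_lt_of_le hz (min_le_left _ _)), h₂ (lt_of_lt_of_le hz (min_le_right _ _))⟩
  | sUnion 𝒮 h ih =>
    rintro p ⟨S, hS, hp⟩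
    obtain ⟨ε, hε, hsub⟩ := ih S hS p hp
    exact ⟨ε, hε, hsub.trans (Set.subset_sUnion_of_mem hS)⟩

lemma fwd_open_of_balls (hd : IsQuasiMetric d) {U : Set X}
    (h : ∀ q ∈ U, ∃ ε > (0:ℝ), {z | d q z < ε} ⊆ U) :
    @IsOpen X (forwardTopology d) U := by
  letI := forwardTopology d
  have : U = ⋃₀ {B | (∃ x : X, ∃ ε : ℝ, 0 < ε ∧ B = {z | d x z < ε}) ∧ B ⊆ U} := by
    apply Set.Subset.antisymm
    · intro q hq
      obtain ⟨ε, hε, hsub⟩ := h q hq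
      exact ⟨{z | d q z < ε}, ⟨⟨q, ε, hε, rfl⟩, hsub⟩, by simpa [hd.refl q] using hε⟩
    · rintro z ⟨B, ⟨_, hBU⟩, hz⟩; exact hBU hz
  rw [this]
  exact isOpen_sUnion fun B hB => TopologicalSpace.GenerateOpen.basic _ hB.1

lemma eq_of_dist_zero (hd : IsQuasiMetric d) (hT2 : @T2Space X (forwardTopology d))
    {p q : X} (h : d p q = 0) : p = q := by
  by_contra hne
  obtain ⟨U, V, hU, hV, hpU, hqV, hdisj⟩ := @t2_separation X (forwardTopology d) hT2 p q hne
  obtain ⟨ε, hε, hsub⟩ := fwd_ball_basis hd hU p hpU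
  have hqU : q ∈ U := hsub (by simp [h, hε])
  exact (Set.disjoint_left.mp hdisj hqU) hqV
end helpers
section helpers2
variable {X : Type*} {d : X → X → ℝ}

/-- If arbitrarily small forward distances from `q` to terms of `t` occur infinitely often,
extract a forward-convergent subsequence. -/
lemma extract_subseq {t : ℕ → X} {q : X} (h : ∀ ε > (0:ℝ), {n | d q (t n) < ε}.Infinite) :
    ∃ ψ : ℕ → ℕ, StrictMono ψ ∧ ForwardConv d (t ∘ ψ) q := by
  have key : ∀ k N : ℕ, ∃ n, N < n ∧ d q (t n) < 1 / (k + 1) := by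
    intro k N
    obtain ⟨n, hn, hlt⟩ := (h (1 / (k + 1)) (by positivity)).exists_gt N
    exact ⟨n, hlt, hn⟩
  choose F hF1 hF2 using key
  set ψ : ℕ → ℕ := fun k => Nat.rec (F 0 0) (fun k ih => F (k + 1) ih) k with hψ
  have hmono : StrictMono ψ := strictMono_nat_of_lt_succ fun k => hF1 (k + 1) (ψ k)
  have hdist : ∀ k, d q (t (ψ k)) < 1 / (k + 1) := by
    intro k
    cases k with
    | zero => exact hF2 0 0
    | succ k => exact hF2 (k + 1) (ψ k)
  refine ⟨ψ, hmono, fun ε hε => ?_⟩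
  obtain ⟨N, hN⟩ := exists_nat_one_div_lt hε
  refine ⟨N, fun n hn => ?_⟩
  have h1 : (1:ℝ) / (n + 1) ≤ 1 / (N + 1) := by
    apply one_div_le_one_div_of_le (by positivity)
    have : (N:ℝ) ≤ n := Nat.cast_le.mpr hn
    linarith
  calc d q ((t ∘ ψ) n) < 1 / (n + 1) := hdist n
    _ ≤ 1 / (N + 1) := h1
    _ < ε := hN

lemma finite_close {t : ℕ → X} (hnc : ¬ ∃ p : X, IsClusterPointOf d t p) (q : X) :
    ∃ ε > (0:ℝ), {n | d q (t n) < ε}.Finite := by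
  by_contra h
  push_neg at h
  have h' : ∀ ε > (0:ℝ), {n | d q (t n) < ε}.Infinite := fun ε hε => h ε hε
  obtain ⟨ψ, hψ, hconv⟩ := extract_subseq h'
  exact hnc ⟨q, ψ, hψ, hconv⟩

lemma fiber_finite {t : ℕ → X} (hd : IsQuasiMetric d)
    (hnc : ¬ ∃ p : X, IsClusterPointOf d t p) (q : X) :
    {n | t n = q}.Finite := by
  obtain ⟨ε, hε, hfin⟩ := finite_close hnc q
  exact hfin.subset fun n hn => by simp only [Set.mem_setOf_eq] at *; rw [hn, hd.refl]; exact hε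

/-- uniqueness of forward limits in a T2 forward topology -/
lemma fwd_limit_unique (hd : IsQuasiMetric d) (hT2 : @T2Space X (forwardTopology d))
    {s : ℕ → X} {p q : X} (hp : ForwardConv d s p) (hq : ForwardConv d s q) : p = q := by
  by_contra hne
  obtain ⟨U, V, hU, hV, hpU, hqV, hdisj⟩ := @t2_separation X (forwardTopology d) hT2 p q hne
  obtain ⟨ε₁, hε₁, hsub₁⟩ := fwd_ball_basis hd hU p hpU
  obtain ⟨ε₂, hε₂, hsub₂⟩ := fwd_ball_basis hd hV q hqV
  obtain ⟨N₁, hN₁⟩ := hp ε₁ hε₁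
  obtain ⟨N₂, hN₂⟩ := hq ε₂ hε₂
  have h1 : s (max N₁ N₂) ∈ U := hsub₁ (hN₁ _ (le_max_left _ _))
  have h2 : s (max N₁ N₂) ∈ V := hsub₂ (hN₂ _ (le_max_right _ _))
  exact (Set.disjoint_left.mp hdisj h1) h2
end helpers2
section helpers3
variable {X : Type*} {d : X → X → ℝ}

/-- Any image of an index set under a cluster-point-free sequence is closed. -/
lemma image_closed (hd : IsQuasiMetric d) (hT2 : @T2Space X (forwardTopology d))
    {t : ℕ → X} (hnc : ¬ ∃ p : X, IsClusterPointOf d t p) (A : Set ℕ) :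
    @IsClosed X (forwardTopology d) (t '' A) := by
  letI := forwardTopology d
  rw [← isOpen_compl_iff]
  apply fwd_open_of_balls hd
  intro q hq
  obtain ⟨ε₀, hε₀, hfin⟩ := finite_close hnc q
  have hFfin : ({n | d q (t n) < ε₀} ∩ A).Finite := hfin.inter_of_left A
  set vals : Finset ℝ := insert ε₀ (hFfin.toFinset.image fun n => d q (t n)) with hvals
  have hne : vals.Nonempty := ⟨ε₀, Finset.mem_insert_self _ _⟩
  have hpos : ∀ v ∈ vals, 0 < v := by
    intro v hv
    rcases Finset.mem_insert.mp hv with rfl | hv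
    · exact hε₀
    · obtain ⟨n, hn, rfl⟩ := Finset.mem_image.mp hv
      rw [Set.Finite.mem_toFinset] at hn
      have hne' : q ≠ t n := by
        rintro rfl; exact hq ⟨n, hn.2, rfl⟩
      rcases lt_or_eq_of_le (hd.nonneg q (t n)) with h | h
      · exact h
      · exact absurd (eq_of_dist_zero hd hT2 h.symm) hne'
  refine ⟨vals.min' hne, (Finset.lt_min'_iff _ _).mpr fun v hv => hpos v hv, ?_⟩
  intro z hz
  simp only [Set.mem_setOf_eq] at hz
  rintro ⟨n, hnA, rfl⟩
  by_cases hcase : d q (t n) < ε₀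
  · have : d q (t n) ∈ vals := Finset.mem_insert_of_mem
      (Finset.mem_image.mpr ⟨n, (Set.Finite.mem_toFinset _).mpr ⟨hcase, hnA⟩, rfl⟩)
    exact absurd hz (not_lt.mpr (Finset.min'_le _ _ this))
  · exact hcase (lt_of_lt_of_le hz (Finset.min'_le _ _ (Finset.mem_insert_self _ _)))

/-- A forward-convergent sequence together with its limit is closed. -/
lemma limit_set_closed (hd : IsQuasiMetric d) (hT2 : @T2Space X (forwardTopology d))
    {t : ℕ → X} {p : X} (hconv : ForwardConv d t p) :
    @IsClosed X (forwardTopology d) (insert p (Set.range t)) := by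
  letI := forwardTopology d
  rw [← isOpen_compl_iff]
  apply fwd_open_of_balls hd
  intro q hq
  have hqp : q ≠ p := fun h => hq (by rw [h]; exact Set.mem_insert p _)
  have hqt : ∀ k, q ≠ t k := fun k h => hq (by rw [h]; exact Set.mem_insert_of_mem _ ⟨k, rfl⟩)
  have hdqp : 0 < d q p := by
    rcases lt_or_eq_of_le (hd.nonneg q p) with h | h
    · exact h
    · exact absurd (eq_of_dist_zero hd hT2 h.symm) hqp
  have hfin : ∃ ε₀ > (0:ℝ), {k | d q (t k) < ε₀}.Finite := by
    by_contra h
    push_neg at h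
    have h' : ∀ ε > (0:ℝ), {k | d q (t k) < ε}.Infinite := fun ε hε => h ε hε
    obtain ⟨ψ, hψ, hcq⟩ := extract_subseq h'
    have hcp : ForwardConv d (t ∘ ψ) p := by
      intro ε hε
      obtain ⟨N, hN⟩ := hconv ε hε
      exact ⟨N, fun n hn => hN (ψ n) (le_trans hn (hψ.le_apply))⟩
    exact hqp (fwd_limit_unique hd hT2 hcq hcp)
  obtain ⟨ε₀, hε₀, hFfin⟩ := hfin
  set vals : Finset ℝ := insert (d q p) (insert ε₀ (hFfin.toFinset.image fun k => d q (t k)))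
    with hvals
  have hne : vals.Nonempty := ⟨d q p, Finset.mem_insert_self _ _⟩
  have hpos : ∀ v ∈ vals, 0 < v := by
    intro v hv
    rcases Finset.mem_insert.mp hv with rfl | hv
    · exact hdqp
    rcases Finset.mem_insert.mp hv with rfl | hv
    · exact hε₀
    obtain ⟨k, hk, rfl⟩ := Finset.mem_image.mp hv
    rcases lt_or_eq_of_le (hd.nonneg q (t k)) with h | h
    · exact h
    · exact absurd (eq_of_dist_zero hd hT2 h.symm) (hqt k)
  refine ⟨vals.min' hne, (Finset.lt_min'_iff _ _).mpr fun v hv => hpos v hv, ?_⟩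
  intro z hz
  simp only [Set.mem_setOf_eq] at hz
  intro hzD
  rcases hzD with rfl | ⟨k, rfl⟩
  · exact absurd hz (not_lt.mpr (Finset.min'_le _ _ (Finset.mem_insert_self _ _)))
  by_cases hcase : d q (t k) < ε₀
  · have hmem : d q (t k) ∈ vals := Finset.mem_insert_of_mem (Finset.mem_insert_of_mem
      (Finset.mem_image.mpr ⟨k, (Set.Finite.mem_toFinset _).mpr hcase, rfl⟩))
    exact absurd hz (not_lt.mpr (Finset.min'_le _ _ hmem))
  · have hmem : ε₀ ∈ vals := Finset.mem_insert_of_mem (Finset.mem_insert_self _ _)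
    exact hcase (lt_of_lt_of_le hz (Finset.min'_le _ _ hmem))

lemma setDist_zero (hd : IsQuasiMetric d) {C D : Set X}
    (h : ∀ ε > (0:ℝ), ∃ a ∈ C, ∃ b ∈ D, d a b < ε) :
    setDist d C D = 0 := by
  set S := {r : ℝ | ∃ a ∈ C, ∃ b ∈ D, d a b = r} with hS
  have hnonneg : ∀ r ∈ S, (0:ℝ) ≤ r := by
    rintro r ⟨a, _, b, _, rfl⟩; exact hd.nonneg a b
  have hbdd : BddBelow S := ⟨0, hnonneg⟩
  have hge : 0 ≤ sInf S := Real.sInf_nonneg hnonneg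
  have hle : sInf S ≤ 0 := by
    by_contra hcon
    push_neg at hcon
    obtain ⟨a, ha, b, hb, hab⟩ := h (sInf S) hcon
    exact absurd (csInf_le hbdd ⟨a, ha, b, hb, rfl⟩) (not_le.mpr hab)
  exact le_antisymm hle hge
end helpers3
/-- existence of disjoint closed sets at distance zero. -/
theorem exists_disjoint_closed_sets_near {X : Type*} (d : X → X → ℝ)
    (hd : IsQuasiMetric d)
    (hT2 : @T2Space X (forwardTopology d))
    (x y : ℕ → X)
    (hnc : ¬ ∃ p : X, IsClusterPointOf d x p)
    (hxy : ∀ n : ℕ, 0 < d (x n) (y n) ∧ d (x n) (y n) < 1 / (n + 1)) :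
    ∃ C D : Set X, @IsClosed X (forwardTopology d) C ∧ @IsClosed X (forwardTopology d) D ∧
      Disjoint C D ∧ {n : ℕ | x n ∈ C}.Infinite ∧ {n : ℕ | y n ∈ D}.Infinite ∧
      setDist d C D = 0 := by
  by_cases hy : ∃ p : X, IsClusterPointOf d y p
  · -- Case 2 : y has a cluster point p along subsequence φ
    obtain ⟨p, φ, hφ, hconv⟩ := hy
    have hE₁ : {m | x m = p}.Finite := fiber_finite hd hnc p
    have hE₂ : {m | ∃ k, x m = y (φ k)}.Finite := by
      by_contra hinf
      replace hinf : {m | ∃ k, x m = y (φ k)}.Infinite := hinf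
      apply hnc
      have h' : ∀ ε > (0:ℝ), {m | d p (x m) < ε}.Infinite := by
        intro ε hε
        obtain ⟨K, hK⟩ := hconv ε hε
        have hbad : {m | ∃ k < K, x m = y (φ k)}.Finite := by
          have hsub : {m | ∃ k < K, x m = y (φ k)} ⊆ ⋃ k ∈ Set.Iio K, {m | x m = y (φ k)} := by
            rintro m ⟨k, hk, hm⟩; exact Set.mem_biUnion hk hm
          exact ((Set.finite_Iio K).biUnion fun k _ => fiber_finite hd hnc (y (φ k))).subset hsub
        refine (hinf.diff hbad).mono ?_
        rintro m ⟨⟨k, hm⟩, hnb⟩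
        have hk : K ≤ k := by
          by_contra h
          exact hnb ⟨k, not_le.mp h, hm⟩
        show d p (x m) < ε
        rw [hm]
        exact hK k hk
      obtain ⟨ψ, hψ, hc⟩ := extract_subseq h'
      exact ⟨p, ψ, hψ, hc⟩
    set E := {m | x m = p} ∪ {m | ∃ k, x m = y (φ k)} with hEdef
    have hE : E.Finite := hE₁.union hE₂
    refine ⟨x '' Eᶜ, insert p (Set.range (y ∘ φ)), image_closed hd hT2 hnc Eᶜ,
      limit_set_closed hd hT2 hconv, ?_, ?_, ?_, ?_⟩
    · rw [Set.disjoint_left]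
      rintro z ⟨m, hm, rfl⟩ hzD
      rcases Set.mem_insert_iff.mp hzD with h | ⟨k, hk⟩
      · exact hm (Set.mem_union_left _ h)
      · exact hm (Set.mem_union_right _ ⟨k, hk.symm⟩)
    · exact (hE.infinite_compl).mono fun n hn => ⟨n, hn, rfl⟩
    · exact (Set.infinite_range_of_injective hφ.injective).mono
        (by rintro n ⟨k, rfl⟩; exact Set.mem_insert_of_mem _ ⟨k, rfl⟩)
    · apply setDist_zero hd
      intro ε hε
      obtain ⟨N, hN⟩ := exists_nat_one_div_lt hε
      have hbadK : (φ ⁻¹' E ∪ Set.Iio N).Finite :=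
        (hE.preimage (Set.injOn_of_injective hφ.injective)).union (Set.finite_Iio N)
      obtain ⟨k, hk⟩ := hbadK.infinite_compl.nonempty
      simp only [Set.mem_compl_iff, Set.mem_union, Set.mem_preimage, Set.mem_Iio, not_or,
        not_lt] at hk
      obtain ⟨hkE, hkN⟩ := hk
      refine ⟨x (φ k), ⟨φ k, hkE, rfl⟩, y (φ k), Set.mem_insert_of_mem _ ⟨k, rfl⟩, ?_⟩
      have h1 : d (x (φ k)) (y (φ k)) < 1 / (φ k + 1) := (hxy (φ k)).2
      have h2 : (1:ℝ) / (φ k + 1) ≤ 1 / (N + 1) := by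
        apply one_div_le_one_div_of_le (by positivity)
        have : (N:ℝ) ≤ φ k := Nat.cast_le.mpr (hkN.trans hφ.le_apply)
        linarith
      linarith
  · -- Case 1 : neither x nor y has a cluster point
    have hncy : ¬ ∃ p : X, IsClusterPointOf d y p := hy
    have key : ∀ N : ℕ, ∃ n, N < n ∧ ∀ m ≤ N, x m ≠ y n ∧ y m ≠ x n := by
      intro N
      have hfin : ((⋃ m ∈ Set.Iic N, {n | x n = y m}) ∪
          ((⋃ m ∈ Set.Iic N, {n | y n = x m}) ∪ Set.Iic N)).Finite :=
        ((Set.finite_Iic N).biUnion fun m _ => fiber_finite hd hnc (y m)).union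
          ((((Set.finite_Iic N).biUnion fun m _ => fiber_finite hd hncy (x m))).union
            (Set.finite_Iic N))
      obtain ⟨n, hn⟩ := hfin.infinite_compl.nonempty
      simp only [Set.mem_compl_iff, Set.mem_union, Set.mem_iUnion, Set.mem_setOf_eq,
        Set.mem_Iic, not_or, not_exists, not_le] at hn
      obtain ⟨h1, h2, h3⟩ := hn
      exact ⟨n, h3, fun m hm => ⟨fun h => h2 m hm h.symm, fun h => h1 m hm h.symm⟩⟩
    choose F hF1 hF2 using key
    set g : ℕ → ℕ := fun k => Nat.rec (F 0) (fun _ ih => F ih) k with hg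
    have hmono : StrictMono g := strictMono_nat_of_lt_succ fun k => hF1 (g k)
    have hkey : ∀ i j, x (g i) ≠ y (g j) := by
      intro i j
      rcases lt_trichotomy i j with h | h | h
      · cases j with
        | zero => omega
        | succ j' =>
          have hle : g i ≤ g j' := hmono.monotone (Nat.lt_succ_iff.mp h)
          exact (hF2 (g j') (g i) hle).1
      · subst h
        intro heq
        have h0 := (hxy (g i)).1
        rw [heq, hd.refl] at h0
        exact lt_irrefl _ h0
      · cases i with
        | zero => omega
        | succ i' =>
          have hle : g j ≤ g i' := hmono.monotone (Nat.lt_succ_iff.mp h)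
          exact fun heq => (hF2 (g i') (g j) hle).2 heq.symm
    refine ⟨x '' Set.range g, y '' Set.range g, image_closed hd hT2 hnc _,
      image_closed hd hT2 hncy _, ?_, ?_, ?_, ?_⟩
    · rw [Set.disjoint_left]
      rintro z ⟨m, ⟨i, rfl⟩, rfl⟩ ⟨m', ⟨j, rfl⟩, hm'⟩
      exact hkey i j hm'.symm
    · exact (Set.infinite_range_of_injective hmono.injective).mono
        (by rintro n ⟨k, rfl⟩; exact ⟨g k, ⟨k, rfl⟩, rfl⟩)
    · exact (Set.infinite_range_of_injective hmono.injective).mono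
        (by rintro n ⟨k, rfl⟩; exact ⟨g k, ⟨k, rfl⟩, rfl⟩)
    · apply setDist_zero hd
      intro ε hε
      obtain ⟨N, hN⟩ := exists_nat_one_div_lt hε
      refine ⟨x (g N), ⟨g N, ⟨N, rfl⟩, rfl⟩, y (g N), ⟨g N, ⟨N, rfl⟩, rfl⟩, ?_⟩
      have h1 : d (x (g N)) (y (g N)) < 1 / (g N + 1) := (hxy (g N)).2
      have h2 : (1:ℝ) / (g N + 1) ≤ 1 / (N + 1) := by
        apply one_div_le_one_div_of_le (by positivity)
        have : (N:ℝ) ≤ g N := Nat.cast_le.mpr hmono.le_apply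
        linarith
      linarith
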